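/- If g(s) and s·g(s) both belong to H²(ℂ₊), then for every t ≥ 0 and ε > 0, the function s·g(s)·e^{−st} lies in the closed span of {g(s)e^{−λs} : |λ − t| < ε}. -/

import Mathlib

open MeasureTheory Complex Filter
open Topology ENNReal

noncomputable section

/-- Boundary `L²` space of the right half-plane: `L²(iℝ)` parametrized by `y ∈ ℝ`. -/
abbrev L2R := MeasureTheory.Lp ℂ 2 (volume : Measure ℝ)

/-- The Hardy space `H²(ℂ₊)` (boundary values): the closed span of the
reproducing kernels `s ↦ 1/(s + w̄)`, `Re w > 0`, evaluated at `s = iy`. -/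
def Hplus : Submodule ℂ L2R :=
  (Submodule.span ℂ {f : L2R | ∃ w : ℂ, 0 < w.re ∧
    (f : ℝ → ℂ) =ᵐ[volume] fun y : ℝ => (Complex.I * y + (starRingEnd ℂ) w)⁻¹}).topologicalClosure

/-- The model space `K_θ = H²(ℂ₊) ⊖ θ H²(ℂ₊)`, for a boundary symbol `θ`. -/
def KmodP (θ : ℝ → ℂ) : Set L2R :=
  {f | f ∈ Hplus ∧ ∀ h : L2R, h ∈ Hplus →
    ∫ y : ℝ, (starRingEnd ℂ) (θ y * h y) * f y = 0}

/-- `N(g)`: the closed span of `{g e^{-λ s} : 0 ≤ λ ≤ δ}` in `H²(ℂ₊)` (boundary model,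
`s = iy`). -/
def NspanP (δ : ℝ) (g : ℝ → ℂ) : Set L2R :=
  SetLike.coe (Submodule.span ℂ {f : L2R | ∃ lam : ℝ, 0 ≤ lam ∧ lam ≤ δ ∧
    (f : ℝ → ℂ) =ᵐ[volume]
      fun y : ℝ => g y * Complex.exp (-(lam : ℂ) * (Complex.I * y))}).topologicalClosure

/-- `N` is invariant under the adjoint multiplication semigroup `{M(t)^*}_{t ≥ 0}`:
for each `f ∈ N` and `t ≥ 0`, the projection of `e^{ts} f` onto `H²` lies in `N`. -/
def BwdInvP (N : Set L2R) : Prop :=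
  ∀ t : ℝ, 0 ≤ t → ∀ f ∈ N, ∃ n ∈ N, ∀ h : L2R, h ∈ Hplus →
    ∫ y : ℝ, (starRingEnd ℂ) (h y) *
      (Complex.exp ((t : ℂ) * (Complex.I * y)) * f y - n y) = 0


lemma abs_one_sub_exp_mul_I_le (θ : ℝ) : ‖1 - Complex.exp (θ * I)‖ ≤ |θ| := by
  have h1 : (1 : ℂ) - Complex.exp (θ * I)
      = ((1 - Real.cos θ : ℝ) : ℂ) + ((-Real.sin θ : ℝ) : ℂ) * I := by
    rw [Complex.exp_mul_I]
    push_cast [← Complex.ofReal_cos, ← Complex.ofReal_sin]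
    ring
  rw [h1, Complex.norm_add_mul_I]
  rw [show |θ| = Real.sqrt (θ ^ 2) by rw [Real.sqrt_sq_eq_abs]]
  apply Real.sqrt_le_sqrt
  nlinarith [Real.one_sub_sq_div_two_le_cos (x := θ), Real.sin_sq_add_cos_sq θ,
    Real.cos_le_one θ]

/-- If `g, s·g ∈ H²(ℂ₊)`, then for all `t ≥ 0`, `ε > 0`,
`s g(s) e^{-st}` lies in the closed span of `{g e^{-λ s} : |λ - t| < ε}`. -/
theorem cyclic_stmt14 (g : ℝ → ℂ)
    (hg : ∃ f : L2R, f ∈ Hplus ∧ (f : ℝ → ℂ) =ᵐ[volume] g)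
    (hsg : ∃ f : L2R, f ∈ Hplus ∧
      (f : ℝ → ℂ) =ᵐ[volume] fun y : ℝ => Complex.I * y * g y)
    (t : ℝ) (ht : 0 ≤ t) (ε : ℝ) (hε : 0 < ε)
    (F : L2R)
    (hF : (F : ℝ → ℂ) =ᵐ[volume] fun y : ℝ =>
      Complex.I * y * g y * Complex.exp (-(t : ℂ) * (Complex.I * y))) :
    F ∈ (Submodule.span ℂ {u : L2R | ∃ lam : ℝ, |lam - t| < ε ∧
      (u : ℝ → ℂ) =ᵐ[volume]
        fun y : ℝ => g y * Complex.exp (-(lam : ℂ) * (Complex.I * y))}).topologicalClosure := by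
  obtain ⟨fg, -, hfg⟩ := hg
  obtain ⟨fsg, -, hfsg⟩ := hsg
  have hgm : MemLp g 2 (volume : Measure ℝ) := (Lp.memLp fg).ae_eq hfg
  have hsgm : MemLp (fun y : ℝ => Complex.I * y * g y) 2 (volume : Measure ℝ) :=
    (Lp.memLp fsg).ae_eq hfsg
  -- basic rewriting and norm facts
  have hrw : ∀ a y : ℝ, -(a : ℂ) * (Complex.I * y) = ((-(a * y) : ℝ) : ℂ) * Complex.I := by
    intro a y; push_cast; ring
  have hexpnorm : ∀ a y : ℝ, ‖Complex.exp (-(a : ℂ) * (Complex.I * y))‖ = 1 := by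
    intro a y
    rw [hrw, Complex.norm_exp_ofReal_mul_I]
  -- the family of functions and their Lp elements
  have hcont : ∀ a : ℝ, Continuous fun y : ℝ => Complex.exp (-(a : ℂ) * (Complex.I * y)) := by
    intro a
    exact Complex.continuous_exp.comp
      (continuous_const.mul (continuous_const.mul Complex.continuous_ofReal))
  have hφ : ∀ lam : ℝ,
      MemLp (fun y : ℝ => g y * Complex.exp (-(lam : ℂ) * (Complex.I * y))) 2
        (volume : Measure ℝ) := by
    intro lam
    refine ⟨hgm.aestronglyMeasurable.mul (hcont lam).aestronglyMeasurable, ?_⟩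
    have : eLpNorm (fun y : ℝ => g y * Complex.exp (-(lam : ℂ) * (Complex.I * y))) 2
        (volume : Measure ℝ) = eLpNorm g 2 (volume : Measure ℝ) := by
      apply eLpNorm_congr_norm_ae
      filter_upwards with y
      rw [norm_mul, hexpnorm lam y, mul_one]
    rw [this]; exact hgm.2
  set u : ℝ → L2R := fun lam => (hφ lam).toLp _ with hudef
  -- the sequence of increments
  set δ : ℕ → ℝ := fun n => ε / (2 * (n + 1)) with hδdef
  have hδpos : ∀ n, 0 < δ n := fun n => by positivity
  have hδlt : ∀ n, δ n < ε := by
    intro n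
    rw [hδdef]
    rw [div_lt_iff₀ (by positivity)]
    nlinarith [hε, Nat.cast_nonneg (α := ℝ) n]
  have hδ0 : Tendsto δ atTop (𝓝 0) := by
    have h1 : Tendsto (fun n : ℕ => 1 / ((n : ℝ) + 1)) atTop (𝓝 0) :=
      tendsto_one_div_add_atTop_nhds_zero_nat
    have h2 := h1.const_mul (ε / 2)
    rw [mul_zero] at h2
    convert h2 using 2 with n
    rw [hδdef]
    field_simp
  set v : ℕ → L2R := fun n => ((δ n : ℂ))⁻¹ • (u t - u (t + δ n)) with hvdef
  have hvmem : ∀ n, v n ∈ (Submodule.span ℂ {u : L2R | ∃ lam : ℝ, |lam - t| < ε ∧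
      (u : ℝ → ℂ) =ᵐ[volume]
        fun y : ℝ => g y * Complex.exp (-(lam : ℂ) * (Complex.I * y))}).topologicalClosure := by
    intro n
    apply Submodule.le_topologicalClosure
    refine Submodule.smul_mem _ _ (Submodule.sub_mem _ ?_ ?_)
    · exact Submodule.subset_span ⟨t, by simpa using hε, (hφ t).coeFn_toLp⟩
    · refine Submodule.subset_span ⟨t + δ n, ?_, (hφ (t + δ n)).coeFn_toLp⟩
      rw [add_sub_cancel_left, abs_of_pos (hδpos n)]
      exact hδlt n
  -- the error functions
  set E : ℝ → ℝ → ℂ := fun h y =>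
    (1 - Complex.exp (-(h : ℂ) * (Complex.I * y))) / h - Complex.I * y with hEdef
  set ψ : ℕ → ℝ → ℂ := fun n y =>
    g y * Complex.exp (-(t : ℂ) * (Complex.I * y)) * E (δ n) y with hψdef
  have hδC : ∀ n, ((δ n : ℝ) : ℂ) ≠ 0 := fun n => Complex.ofReal_ne_zero.mpr (hδpos n).ne'
  have hae : ∀ n, (⇑(v n) - ⇑F) =ᵐ[volume] ψ n := by
    intro n
    have h1 := Lp.coeFn_smul ((δ n : ℂ))⁻¹ (u t - u (t + δ n))
    have h2 := Lp.coeFn_sub (u t) (u (t + δ n))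
    have h3 : ⇑(u t) =ᵐ[volume] (fun y : ℝ => g y * Complex.exp (-(t : ℂ) * (Complex.I * y))) :=
      (hφ t).coeFn_toLp
    have h4 : ⇑(u (t + δ n)) =ᵐ[volume]
        (fun y : ℝ => g y * Complex.exp (-((t + δ n : ℝ) : ℂ) * (Complex.I * y))) :=
      (hφ (t + δ n)).coeFn_toLp
    filter_upwards [h1, h2, h3, h4, hF] with y e1 e2 e3 e4 e5
    simp only [Pi.sub_apply]
    rw [hvdef]
    simp only
    rw [e1]
    simp only [Pi.smul_apply, smul_eq_mul]
    rw [e2]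
    simp only [Pi.sub_apply]
    rw [e3, e4, e5, hψdef, hEdef]
    simp only
    have hsplit : Complex.exp (-((t + δ n : ℝ) : ℂ) * (Complex.I * y))
        = Complex.exp (-(t : ℂ) * (Complex.I * y)) *
          Complex.exp (-((δ n : ℝ) : ℂ) * (Complex.I * y)) := by
      rw [← Complex.exp_add]
      congr 1
      push_cast
      ring
    rw [hsplit]
    field_simp [hδC n]
  -- norm bound
  have hEbound : ∀ h : ℝ, h ≠ 0 → ∀ y : ℝ, ‖E h y‖ ≤ 2 * |y| := by
    intro h hh y
    have h1 : ‖(1 - Complex.exp (-(h : ℂ) * (Complex.I * y))) / (h : ℂ)‖ ≤ |y| := by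
      rw [norm_div, hrw]
      have hnum := abs_one_sub_exp_mul_I_le (-(h * y))
      have hden : ‖(h : ℂ)‖ = |h| := by rw [Complex.norm_real, Real.norm_eq_abs]
      rw [hden, div_le_iff₀ (abs_pos.mpr hh)]
      calc ‖1 - Complex.exp (((-(h * y) : ℝ) : ℂ) * Complex.I)‖ ≤ |(-(h * y))| :=
            hnum
        _ = |y| * |h| := by rw [abs_neg, abs_mul]; ring
    have h2 : ‖Complex.I * (y : ℂ)‖ = |y| := by
      rw [norm_mul, Complex.norm_I, one_mul, Complex.norm_real, Real.norm_eq_abs]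
    calc ‖E h y‖ ≤ ‖(1 - Complex.exp (-(h : ℂ) * (Complex.I * y))) / (h : ℂ)‖ +
          ‖Complex.I * (y : ℂ)‖ := norm_sub_le _ _
      _ ≤ |y| + |y| := add_le_add h1 (le_of_eq h2)
      _ = 2 * |y| := by ring
  have hψbound : ∀ n y, ‖ψ n y‖ ≤ ‖(2 : ℂ) * (Complex.I * y * g y)‖ := by
    intro n y
    have hE := hEbound (δ n) (hδpos n).ne' y
    have h1 : ‖ψ n y‖ = ‖g y‖ * ‖E (δ n) y‖ := by
      rw [hψdef]
      simp only [norm_mul]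
      rw [hexpnorm t y]
      ring
    have h2 : ‖(2 : ℂ) * (Complex.I * (y : ℂ) * g y)‖ = 2 * (|y| * ‖g y‖) := by
      simp only [norm_mul, Complex.norm_I, Complex.norm_real, Real.norm_eq_abs]
      norm_num
    rw [h1, h2]
    nlinarith [norm_nonneg (g y), norm_nonneg (E (δ n) y), abs_nonneg y, hE]
  -- pointwise convergence
  have hElim : ∀ y : ℝ, Tendsto (fun n => E (δ n) y) atTop (𝓝 0) := by
    intro y
    set c : ℂ := Complex.I * y with hc
    have hd : HasDerivAt (fun h : ℝ => Complex.exp (-(h : ℂ) * c)) (-c) 0 := by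
      have h0 : HasDerivAt (fun z : ℂ => -z * c) (-1 * c) 0 := (hasDerivAt_id _).neg.mul_const c
      have h1 : HasDerivAt (fun z : ℂ => Complex.exp (-z * c)) (-c) 0 := by simpa using h0.cexp
      simpa using h1.comp_ofReal
    have hs := hasDerivAt_iff_tendsto_slope.mp hd
    have hδ0' : Tendsto δ atTop (𝓝[≠] (0 : ℝ)) :=
      tendsto_nhdsWithin_iff.mpr ⟨hδ0, Eventually.of_forall fun n => (hδpos n).ne'⟩
    have h2 := hs.comp hδ0'
    have h4 : (fun n => E (δ n) y)
        = fun n => -((slope (fun h : ℝ => Complex.exp (-(h : ℂ) * c)) 0) (δ n)) - c := by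
      funext n
      rw [slope_def_module]
      rw [hEdef]
      simp only [sub_zero, Complex.real_smul, Complex.ofReal_inv, Complex.ofReal_zero, neg_zero,
        zero_mul, Complex.exp_zero]
      rw [hc]
      ring
    rw [h4]
    have h5 := (h2.neg).sub_const c
    simpa using h5
  have hψlim : ∀ y : ℝ, Tendsto (fun n => ψ n y) atTop (𝓝 0) := by
    intro y
    have := (hElim y).const_mul (g y * Complex.exp (-(t : ℂ) * (Complex.I * y)))
    rw [mul_zero] at this
    exact this
  -- measurability
  have hψmeas : ∀ n, AEStronglyMeasurable (ψ n) (volume : Measure ℝ) := by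
    intro n
    apply AEStronglyMeasurable.mul
    · exact hgm.aestronglyMeasurable.mul (hcont t).aestronglyMeasurable
    · apply Continuous.aestronglyMeasurable
      rw [hEdef]
      exact (((continuous_const.sub (hcont (δ n))).div_const _).sub
        (continuous_const.mul Complex.continuous_ofReal))
  -- L² convergence via dominated convergence
  have key : Tendsto (fun n => eLpNorm (⇑(v n) - ⇑F) 2 (volume : Measure ℝ)) atTop (𝓝 0) := by
    have heq : ∀ n, eLpNorm (⇑(v n) - ⇑F) 2 (volume : Measure ℝ)
        = eLpNorm (ψ n) 2 (volume : Measure ℝ) := fun n => eLpNorm_congr_ae (hae n)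
    simp only [heq]
    have hform : ∀ n, eLpNorm (ψ n) 2 (volume : Measure ℝ)
        = (∫⁻ y : ℝ, (‖ψ n y‖₊ : ℝ≥0∞) ^ (2 : ℝ)) ^ (1 / (2 : ℝ)) := by
      intro n
      rw [eLpNorm_eq_lintegral_rpow_enorm_toReal (by norm_num) (by norm_num)]
      simp only [enorm_eq_nnnorm]
      norm_num
    simp only [hform]
    have hfin : (∫⁻ y : ℝ, (‖(2 : ℂ) * (Complex.I * y * g y)‖₊ : ℝ≥0∞) ^ (2 : ℝ)) ≠ ⊤ := by
      have hw : MemLp (fun y : ℝ => (2 : ℂ) * (Complex.I * y * g y)) 2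
          (volume : Measure ℝ) := hsgm.const_mul 2
      have hw2 := hw.2
      rw [eLpNorm_eq_lintegral_rpow_enorm_toReal (by norm_num) (by norm_num)] at hw2
      simp only [ENNReal.toReal_ofNat, enorm_eq_nnnorm] at hw2
      intro hcon
      rw [hcon, ENNReal.top_rpow_of_pos (by norm_num)] at hw2
      exact lt_irrefl _ hw2
    have hint : Tendsto (fun n => ∫⁻ y : ℝ, (‖ψ n y‖₊ : ℝ≥0∞) ^ (2 : ℝ)) atTop (𝓝 0) := by
      have h0 : (0 : ℝ≥0∞) = ∫⁻ _ : ℝ, (0 : ℝ≥0∞) := by simp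
      rw [h0]
      refine tendsto_lintegral_of_dominated_convergence'
        (fun y : ℝ => (‖(2 : ℂ) * (Complex.I * y * g y)‖₊ : ℝ≥0∞) ^ (2 : ℝ))
        (fun n => ?_) (fun n => Eventually.of_forall fun y => ?_) hfin
        (Eventually.of_forall fun y => ?_)
      · exact (ENNReal.continuous_rpow_const (y := (2:ℝ))).measurable.comp_aemeasurable
          (hψmeas n).enorm
      · exact ENNReal.rpow_le_rpow (by exact_mod_cast hψbound n y) (by norm_num)
      · have hcont2 : Continuous fun z : ℂ => ((‖z‖₊ : ℝ≥0∞)) ^ (2 : ℝ) :=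
          (ENNReal.continuous_rpow_const (y := (2:ℝ))).comp
            (ENNReal.continuous_coe.comp continuous_nnnorm)
        have := (hcont2.tendsto 0).comp (hψlim y)
        simpa [ENNReal.zero_rpow_of_pos, Function.comp_def] using this
    have := ((ENNReal.continuous_rpow_const (y := 1 / (2:ℝ))).tendsto 0).comp hint
    simpa [ENNReal.zero_rpow_of_pos, Function.comp_def] using this
  have hv : Tendsto v atTop (𝓝 F) := (Lp.tendsto_Lp_iff_tendsto_eLpNorm' v F).mpr key
  exact (Submodule.isClosed_topologicalClosure _).mem_of_tendsto hv
    (Eventually.of_forall hvmem)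


end
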